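/- Let C be an [n, k, n−k] near-MDS code over F_q with n − k > q and k ≥ 2. Then k ≤ 2q. -/

import Mathlib

/-- For an [n, k, n−k] near-MDS code over F_q with n − k > q and k ≥ 2, one has k ≤ 2q. -/
theorem stmt_4 (q n k : ℕ) (F : Type) [Field F] [Fintype F] [DecidableEq F]
    (hq : Fintype.card F = q)
    (C : Submodule F (Fin n → F))
    (hdim : Module.finrank F C = k)
    (hk : 2 ≤ k) (hkn : k ≤ n)
    -- C has minimum distance n − k
    (hd1 : ∀ c ∈ C, c ≠ 0 → n - k ≤ hammingNorm c)
    (hd2 : ∃ c ∈ C, c ≠ 0 ∧ hammingNorm c = n - k)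
    -- the dual code has minimum distance k
    (hdual1 : ∀ u : Fin n → F, (∀ c ∈ C, ∑ i, u i * c i = 0) → u ≠ 0 →
      k ≤ hammingNorm u)
    (hdual2 : ∃ u : Fin n → F, (∀ c ∈ C, ∑ i, u i * c i = 0) ∧ u ≠ 0 ∧
      hammingNorm u = k)
    (hnkq : q < n - k) :
    k ≤ 2 * q := by
  classical
  by_contra hcon
  push_neg at hcon
  obtain ⟨u, hu_dual, hu_ne, hu_wt⟩ := hdual2
  have hq2 : 2 ≤ q := hq ▸ Fintype.one_lt_card
  set S : Finset (Fin n) := {i | u i ≠ 0} with hSdef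
  have hScard : S.card = k := hu_wt
  have hSc : Sᶜ.card = n - k := by
    rw [Finset.card_compl, hScard, Fintype.card_fin]
  -- choose T ⊆ Sᶜ of size n - k - 2
  obtain ⟨T, hTsub, hTcard⟩ := Finset.exists_subset_card_eq (s := Sᶜ) (n := n - k - 2)
    (by rw [hSc]; omega)
  -- the pairing map
  let pair : (Fin n → F) →ₗ[F] (C →ₗ[F] F) :=
    LinearMap.mk₂ F (fun v (c : C) => ∑ i, v i * (c : Fin n → F) i)
      (fun m₁ m₂ c => by simp [add_mul, Finset.sum_add_distrib])
      (fun a m c => by simp [Finset.mul_sum, mul_assoc])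
      (fun m c₁ c₂ => by simp [mul_add, Finset.sum_add_distrib])
      (fun a m c => by simp [Finset.mul_sum, mul_left_comm])
  let res : (Fin n → F) →ₗ[F] ({ x // x ∈ T } → F) :=
    LinearMap.funLeft F F (fun i => (i : Fin n))
  let Φ := pair.prod res
  have hW2 : 2 ≤ Module.finrank F (LinearMap.ker Φ) := by
    have hrn := LinearMap.finrank_range_add_finrank_ker Φ
    have hr : Module.finrank F (LinearMap.range Φ) ≤ k + (n - k - 2) := by
      have := Submodule.finrank_le (LinearMap.range Φ)
      rw [Module.finrank_prod, Module.finrank_linearMap, hdim,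
        Module.finrank_self, Module.finrank_pi, Fintype.card_coe, hTcard,
        mul_one] at this
      exact this
    rw [Module.finrank_pi, Fintype.card_fin] at hrn
    omega
  have huW : u ∈ LinearMap.ker Φ := by
    rw [LinearMap.mem_ker]
    refine Prod.ext ?_ ?_
    · ext c; exact hu_dual c c.2
    · funext i
      have : (i : Fin n) ∈ Sᶜ := hTsub i.2
      simp only [Finset.mem_compl, hSdef, Finset.mem_filter, Finset.mem_univ,
        true_and, not_not] at this
      exact this
  -- find v in ker Φ not in span of u
  have hnle : ¬ (LinearMap.ker Φ ≤ Submodule.span F {u}) := by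
    intro hle
    have := Submodule.finrank_mono hle
    rw [finrank_span_singleton hu_ne] at this
    omega
  obtain ⟨v, hvW, hv_span⟩ := SetLike.not_le_iff_exists.mp hnle
  rw [LinearMap.mem_ker, Prod.ext_iff] at hvW
  obtain ⟨hv1, hv2⟩ := hvW
  have hv_dual : ∀ c ∈ C, ∑ i, v i * c i = 0 := by
    intro c hc
    have := congrFun (congrArg DFunLike.coe hv1) ⟨c, hc⟩
    simpa [Φ, pair] using this
  have hvT : ∀ i ∈ T, v i = 0 := by
    intro i hi
    have := congrFun hv2 ⟨i, hi⟩
    simpa [Φ, res, LinearMap.funLeft] using this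
  -- pigeonhole over the values v i / u i on S
  set Sa : F → Finset (Fin n) := fun a => S.filter (fun i => v i / u i = a)
    with hSadef
  have hsum : ∑ a : F, (Sa a).card = k := by
    rw [← hScard]
    exact (Finset.card_eq_sum_card_fiberwise (fun i _ => Finset.mem_univ _)).symm
  obtain ⟨a, -, hmax⟩ := Finset.exists_max_image Finset.univ
    (fun a => (Sa a).card) Finset.univ_nonempty
  have hak : k ≤ q * (Sa a).card := by
    calc k = ∑ b : F, (Sa b).card := hsum.symm
    _ ≤ Finset.univ.card • (Sa a).card :=
        Finset.sum_le_card_nsmul _ _ _ (fun b _ => hmax b (Finset.mem_univ b))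
    _ = q * (Sa a).card := by rw [smul_eq_mul, Finset.card_univ, hq]
  -- members of Sa a satisfy v i = a * u i
  have hSaS : Sa a ⊆ S := Finset.filter_subset _ _
  have hSa_eq : ∀ i ∈ Sa a, v i = a * u i := by
    intro i hi
    rw [hSadef] at hi
    simp only [Finset.mem_filter] at hi
    obtain ⟨hiS, hdiv⟩ := hi
    have hui : u i ≠ 0 := by
      simpa [hSdef] using hiS
    field_simp at hdiv
    rw [hdiv, mul_comm]
  -- the word w = v - a • u
  set w : Fin n → F := v - a • u with hwdef
  have hw_ne : w ≠ 0 := by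
    intro h
    apply hv_span
    have : v = a • u := by
      have := sub_eq_zero.mp h
      simpa using this
    rw [this]
    exact Submodule.smul_mem _ _ (Submodule.mem_span_singleton_self u)
  have hw_dual : ∀ c ∈ C, ∑ i, w i * c i = 0 := by
    intro c hc
    have h1 := hv_dual c hc
    have h2 := hu_dual c hc
    simp only [hwdef, Pi.sub_apply, Pi.smul_apply, smul_eq_mul, sub_mul,
      Finset.sum_sub_distrib, mul_assoc, ← Finset.mul_sum, h1, h2, mul_zero,
      sub_zero]
  have hw_wt : k ≤ hammingNorm w := hdual1 w hw_dual hw_ne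
  -- support of w is small
  have hsupp : Finset.filter (fun i => w i ≠ 0) Finset.univ ⊆
      (S \ Sa a) ∪ (Sᶜ \ T) := by
    intro i hi
    simp only [Finset.mem_filter, Finset.mem_univ, true_and] at hi
    by_contra hmem
    simp only [Finset.mem_union, Finset.mem_sdiff, Finset.mem_compl,
      not_or, not_and, not_not] at hmem
    obtain ⟨h1, h2⟩ := hmem
    apply hi
    by_cases hiS : i ∈ S
    · have := hSa_eq i (h1 hiS)
      simp [hwdef, this]
    · have hu0 : u i = 0 := by
        simpa [hSdef] using hiS
      have hv0 : v i = 0 := hvT i (h2 (by simpa [hSdef] using hiS))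
      simp [hwdef, hu0, hv0]
  have hcard : hammingNorm w ≤ (k - (Sa a).card) + 2 := by
    have h1 : (S \ Sa a).card = k - (Sa a).card := by
      rw [Finset.card_sdiff_of_subset hSaS, hScard]
    have h2 : (Sᶜ \ T).card = 2 := by
      rw [Finset.card_sdiff_of_subset hTsub, hSc, hTcard]; omega
    calc hammingNorm w ≤ ((S \ Sa a) ∪ (Sᶜ \ T)).card := by
          exact Finset.card_le_card hsupp
    _ ≤ (S \ Sa a).card + (Sᶜ \ T).card := Finset.card_union_le _ _
    _ = (k - (Sa a).card) + 2 := by rw [h1, h2]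
  have hSak : (Sa a).card ≤ k := hScard ▸ Finset.card_le_card hSaS
  have h3 : (Sa a).card ≤ 2 := by omega
  have h4 : k ≤ q * 2 := le_trans hak (Nat.mul_le_mul_left q h3)
  omega
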